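/- Let H be a complex Hilbert space, P0 an orthogonal projection on H, f0 a unit vector with P0 f0 = f0, and X ∈ B(H) anti-Hermitian. Then there exists an anti-Hermitian Y0 ∈ B(H) with Y0 P0 = P0 Y0 and Y0 f0 = 0 such that ‖X + Y0‖ ≤ ‖X + Y‖ for every anti-Hermitian Y ∈ B(H) with Y P0 = P0 Y and Y f0 = 0. In other words, the quotient norm inf{‖X+Y‖ : Y in the vertical space at (P0,f0)} is attained: every tangent vector admits a minimal lifting. -/

import Mathlib

open ContinuousLinearMap Filter Topology
open scoped InnerProductSpace ComplexConjugate

/-- Ultrafilter limit of a bounded sequence of complex numbers exists. -/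
private lemma ulim_tendsto (U : Ultrafilter ℕ) (c : ℕ → ℂ) (C : ℝ) (h : ∀ n, ‖c n‖ ≤ C) :
    Tendsto c U (𝓝 (limUnder (U : Filter ℕ) c)) := by
  apply tendsto_nhds_limUnder
  have hmem : (U : Filter ℕ).map c ≤ Filter.principal (Metric.closedBall (0 : ℂ) C) := by
    rw [Filter.le_principal_iff, Filter.mem_map]
    apply Filter.univ_mem'
    intro n
    simpa [Metric.mem_closedBall, dist_zero_right] using h n
  obtain ⟨x, -, hx⟩ := (isCompact_closedBall (0 : ℂ) C).ultrafilter_le_nhds (U.map c) hmem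
  exact ⟨x, hx⟩

/-- For an orthogonal projection `P0`, a unit vector `f0` with
`P0 f0 = f0`, and an anti-Hermitian `X ∈ B(H)`, there is an anti-Hermitian `Y0`
commuting with `P0` and killing `f0` (i.e. an element of the vertical space at
`(P0, f0)`) such that `‖X + Y0‖ ≤ ‖X + Y‖` for every vertical `Y`: the quotient norm is
attained, i.e. every tangent vector admits a minimal lifting. -/
theorem exists_minimal_lifting
    {H : Type*} [NormedAddCommGroup H] [InnerProductSpace ℂ H] [CompleteSpace H]
    (P0 : H →L[ℂ] H) (hP0sa : IsSelfAdjoint P0) (hP0idem : P0 * P0 = P0)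
    (f0 : H) (hf0 : ‖f0‖ = 1) (hf0fix : P0 f0 = f0)
    (X : H →L[ℂ] H) (hX : adjoint X = -X) :
    ∃ Y0 : H →L[ℂ] H, adjoint Y0 = -Y0 ∧ Y0 * P0 = P0 * Y0 ∧ Y0 f0 = 0 ∧
      ∀ Y : H →L[ℂ] H, adjoint Y = -Y → Y * P0 = P0 * Y → Y f0 = 0 →
        ‖X + Y0‖ ≤ ‖X + Y‖ := by
  classical
  -- the set of norms of liftings
  set S : Set ℝ := {r | ∃ Y : H →L[ℂ] H, (adjoint Y = -Y ∧ Y * P0 = P0 * Y ∧ Y f0 = 0) ∧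
      r = ‖X + Y‖} with hS
  have hSne : S.Nonempty := ⟨‖X + 0‖, 0, ⟨by simp [map_zero], by simp, by simp⟩, rfl⟩
  have hSbd : BddBelow S := ⟨0, fun r ⟨Y, _, hr⟩ => hr ▸ norm_nonneg _⟩
  set m : ℝ := sInf S with hm
  have hm0 : 0 ≤ m := le_csInf hSne fun r ⟨Y, _, hr⟩ => hr ▸ norm_nonneg _
  have hmle : ∀ Y : H →L[ℂ] H, adjoint Y = -Y → Y * P0 = P0 * Y → Y f0 = 0 → m ≤ ‖X + Y‖ :=
    fun Y h1 h2 h3 => csInf_le hSbd ⟨Y, ⟨h1, h2, h3⟩, rfl⟩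
  -- a minimizing sequence
  have hseq : ∀ n : ℕ, ∃ Y : H →L[ℂ] H, (adjoint Y = -Y ∧ Y * P0 = P0 * Y ∧ Y f0 = 0) ∧
      ‖X + Y‖ < m + 1 / (n + 1) := by
    intro n
    have hpos : (0 : ℝ) < 1 / (n + 1) := by positivity
    obtain ⟨r, ⟨Y, hY, hr⟩, hlt⟩ := exists_lt_of_csInf_lt hSne (by linarith : sInf S < m + 1 / (n + 1))
    exact ⟨Y, hY, hr ▸ hlt⟩
  choose Z hZv hZlt using hseq
  have hZsa : ∀ n, adjoint (Z n) = -(Z n) := fun n => (hZv n).1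
  have hZcomm : ∀ n, Z n * P0 = P0 * Z n := fun n => (hZv n).2.1
  have hZf0 : ∀ n, Z n f0 = 0 := fun n => (hZv n).2.2
  -- uniform bound
  set C : ℝ := m + 1 + ‖X‖ with hC
  have hZbd : ∀ n, ‖Z n‖ ≤ C := by
    intro n
    have h1 : (1 : ℝ) / (n + 1) ≤ 1 := by
      rw [div_le_one (by positivity)]; linarith [Nat.cast_nonneg (α := ℝ) n]
    calc ‖Z n‖ = ‖(X + Z n) - X‖ := by rw [add_sub_cancel_left]
      _ ≤ ‖X + Z n‖ + ‖X‖ := norm_sub_le _ _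
      _ ≤ C := by have := hZlt n; simp only [hC]; linarith
  -- the ultrafilter
  set U : Ultrafilter ℕ := Ultrafilter.of atTop with hU
  have hUle : (U : Filter ℕ) ≤ atTop := Ultrafilter.of_le _
  -- WOT limit of the sequence as a sesquilinear form
  set g : H → H → ℂ := fun y x => limUnder (U : Filter ℕ) (fun n => ⟪Z n y, x⟫_ℂ) with hg
  have hbd : ∀ (y x : H) (n : ℕ), ‖⟪Z n y, x⟫_ℂ‖ ≤ C * ‖y‖ * ‖x‖ := by
    intro y x n
    calc ‖⟪Z n y, x⟫_ℂ‖ ≤ ‖Z n y‖ * ‖x‖ := norm_inner_le_norm _ _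
      _ ≤ (‖Z n‖ * ‖y‖) * ‖x‖ := by
          gcongr; exact (Z n).le_opNorm y
      _ ≤ C * ‖y‖ * ‖x‖ := by gcongr; exact hZbd n
  have htend : ∀ y x : H, Tendsto (fun n => ⟪Z n y, x⟫_ℂ) U (𝓝 (g y x)) :=
    fun y x => ulim_tendsto U _ (C * ‖y‖ * ‖x‖) (hbd y x)
  have hgbd : ∀ y x : H, ‖g y x‖ ≤ C * ‖y‖ * ‖x‖ := fun y x =>
    le_of_tendsto' (htend y x).norm (hbd y x)
  -- for each y, the functional x ↦ g y x is continuous linear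
  have hLdef : ∀ y : H, ∃ L : H →L[ℂ] ℂ, (∀ x, L x = g y x) ∧ ‖L‖ ≤ C * ‖y‖ := by
    intro y
    refine ⟨LinearMap.mkContinuous
      { toFun := g y
        map_add' := fun x x' => tendsto_nhds_unique (htend y (x + x'))
          (by simpa [inner_add_right] using (htend y x).add (htend y x'))
        map_smul' := fun c x => tendsto_nhds_unique (htend y (c • x))
          (by simpa [inner_smul_right] using (htend y x).const_mul c) }
      (C * ‖y‖) (fun x => by simpa [mul_assoc] using hgbd y x), fun x => rfl, ?_⟩
    exact LinearMap.mkContinuous_norm_le _ (by positivity) _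
  choose L hLg hLn using hLdef
  -- the limiting operator via Riesz representation
  set F : H → H := fun y => (InnerProductSpace.toDual ℂ H).symm (L y) with hF
  have hFinner : ∀ y x : H, ⟪F y, x⟫_ℂ = g y x := by
    intro y x
    rw [hF]
    rw [InnerProductSpace.toDual_symm_apply]
    exact hLg y x
  have hFtend : ∀ y x : H, Tendsto (fun n => ⟪Z n y, x⟫_ℂ) U (𝓝 (⟪F y, x⟫_ℂ)) := by
    intro y x; rw [hFinner]; exact htend y x
  -- linearity
  have hFadd : ∀ y y' : H, F (y + y') = F y + F y' := by
    intro y y'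
    apply ext_inner_right ℂ
    intro x
    rw [inner_add_left, hFinner, hFinner, hFinner]
    refine tendsto_nhds_unique (htend (y + y') x) ?_
    simpa [inner_add_left] using (htend y x).add (htend y' x)
  have hFsmul : ∀ (c : ℂ) (y : H), F (c • y) = c • F y := by
    intro c y
    apply ext_inner_right ℂ
    intro x
    rw [inner_smul_left, hFinner, hFinner]
    refine tendsto_nhds_unique (htend (c • y) x) ?_
    simpa [inner_smul_left, mul_comm] using (htend y x).const_mul (conj c)
  have hFnorm : ∀ y : H, ‖F y‖ ≤ C * ‖y‖ := by
    intro y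
    rw [hF]
    rw [LinearIsometryEquiv.norm_map]
    exact hLn y
  set Y0 : H →L[ℂ] H := LinearMap.mkContinuous
    { toFun := F, map_add' := hFadd, map_smul' := hFsmul } C hFnorm with hY0
  have hY0apply : ∀ y : H, Y0 y = F y := fun y => rfl
  have hY0inner : ∀ y x : H, ⟪Y0 y, x⟫_ℂ = g y x := fun y x => hFinner y x
  -- helper: P0 moves through inner products
  have hPinner : ∀ a b : H, ⟪P0 a, b⟫_ℂ = ⟪a, P0 b⟫_ℂ := by
    intro a b
    calc ⟪P0 a, b⟫_ℂ = ⟪adjoint P0 a, b⟫_ℂ := by rw [hP0sa.adjoint_eq]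
      _ = ⟪a, P0 b⟫_ℂ := adjoint_inner_left _ _ _
  refine ⟨Y0, ?_, ?_, ?_, ?_⟩
  · -- anti-Hermitian
    apply ContinuousLinearMap.ext
    intro y
    apply ext_inner_right ℂ
    intro x
    rw [adjoint_inner_left]
    have h1 : ⟪y, Y0 x⟫_ℂ = conj (⟪Y0 x, y⟫_ℂ) := (inner_conj_symm _ _).symm
    have h2 : Tendsto (fun n => conj (⟪Z n x, y⟫_ℂ)) U (𝓝 (conj (⟪Y0 x, y⟫_ℂ))) :=
      (hFtend x y).star
    have h3 : (fun n => conj (⟪Z n x, y⟫_ℂ)) = fun n => -⟪Z n y, x⟫_ℂ := by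
      funext n
      rw [← inner_conj_symm (Z n x) y]
      rw [starRingEnd_self_apply]
      calc ⟪y, Z n x⟫_ℂ = ⟪adjoint (Z n) y, x⟫_ℂ := (adjoint_inner_left _ _ _).symm
        _ = -⟪Z n y, x⟫_ℂ := by rw [hZsa n]; simp [inner_neg_left]
    rw [h3] at h2
    have h4 : Tendsto (fun n => -⟪Z n y, x⟫_ℂ) U (𝓝 (-⟪Y0 y, x⟫_ℂ)) := (hFtend y x).neg
    have h5 : conj (⟪Y0 x, y⟫_ℂ) = -⟪Y0 y, x⟫_ℂ := tendsto_nhds_unique h2 h4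
    rw [h1, h5]
    simp [inner_neg_left]
  · -- commutes with P0
    apply ContinuousLinearMap.ext
    intro y
    apply ext_inner_right ℂ
    intro x
    simp only [ContinuousLinearMap.mul_apply]
    have h1 : (fun n => ⟪Z n (P0 y), x⟫_ℂ) = fun n => ⟪Z n y, P0 x⟫_ℂ := by
      funext n
      have hc : Z n (P0 y) = P0 (Z n y) := by
        have := congrArg (fun T : H →L[ℂ] H => T y) (hZcomm n)
        simpa [ContinuousLinearMap.mul_apply] using this
      rw [hc, hPinner]
    have h2 : Tendsto (fun n => ⟪Z n (P0 y), x⟫_ℂ) U (𝓝 (⟪Y0 (P0 y), x⟫_ℂ)) := hFtend (P0 y) x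
    rw [h1] at h2
    have h3 : ⟪Y0 (P0 y), x⟫_ℂ = ⟪Y0 y, P0 x⟫_ℂ := tendsto_nhds_unique h2 (hFtend y (P0 x))
    rw [h3, ← hPinner]
  · -- kills f0
    apply ext_inner_right ℂ
    intro x
    have h2 : Tendsto (fun n => ⟪Z n f0, x⟫_ℂ) U (𝓝 (⟪Y0 f0, x⟫_ℂ)) := hFtend f0 x
    have h1 : (fun n => ⟪Z n f0, x⟫_ℂ) = fun _ => (0 : ℂ) := by
      funext n; rw [hZf0 n, inner_zero_left]
    rw [h1] at h2
    have := tendsto_nhds_unique h2 tendsto_const_nhds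
    rw [this, inner_zero_left]
  · -- minimality
    intro Y h1 h2 h3
    refine le_trans ?_ (hmle Y h1 h2 h3)
    -- show ‖X + Y0‖ ≤ m
    refine ContinuousLinearMap.opNorm_le_bound _ hm0 ?_
    intro y
    set z : H := (X + Y0) y with hz
    have key : ∀ x : H, ‖⟪z, x⟫_ℂ‖ ≤ m * ‖y‖ * ‖x‖ := by
      intro x
      have htz : Tendsto (fun n => ⟪(X + Z n) y, x⟫_ℂ) U (𝓝 (⟪z, x⟫_ℂ)) := by
        have : Tendsto (fun n => ⟪X y, x⟫_ℂ + ⟪Z n y, x⟫_ℂ) U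
            (𝓝 (⟪X y, x⟫_ℂ + ⟪Y0 y, x⟫_ℂ)) := tendsto_const_nhds.add (hFtend y x)
        simpa [hz, inner_add_left, ContinuousLinearMap.add_apply] using this
      have hb : ∀ n : ℕ, ‖⟪(X + Z n) y, x⟫_ℂ‖ ≤ (m + 1 / (n + 1)) * (‖y‖ * ‖x‖) := by
        intro n
        calc ‖⟪(X + Z n) y, x⟫_ℂ‖ ≤ ‖(X + Z n) y‖ * ‖x‖ := norm_inner_le_norm _ _
          _ ≤ (‖X + Z n‖ * ‖y‖) * ‖x‖ := by gcongr; exact (X + Z n).le_opNorm y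
          _ ≤ (m + 1 / (n + 1)) * (‖y‖ * ‖x‖) := by
              rw [mul_assoc]; gcongr; exact (hZlt n).le
      have hr : Tendsto (fun n : ℕ => (m + 1 / (n + 1)) * (‖y‖ * ‖x‖)) U
          (𝓝 (m * (‖y‖ * ‖x‖))) := by
        have h0 : Tendsto (fun n : ℕ => (m + 1 / (n + 1)) * (‖y‖ * ‖x‖)) atTop
            (𝓝 ((m + 0) * (‖y‖ * ‖x‖))) :=
          (tendsto_const_nhds.add tendsto_one_div_add_atTop_nhds_zero_nat).mul_const _
        rw [add_zero] at h0
        exact h0.mono_left hUle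
      have := le_of_tendsto_of_tendsto' htz.norm hr hb
      linarith [this, le_of_eq (mul_assoc m ‖y‖ ‖x‖)]
    -- conclude with x = z
    rcases eq_or_lt_of_le (norm_nonneg z) with hz0 | hz0
    · rw [← hz0]; positivity
    · have := key z
      have hzz : ‖⟪z, z⟫_ℂ‖ = ‖z‖ * ‖z‖ := by
        rw [inner_self_eq_norm_sq_to_K, sq]
        push_cast
        simp [norm_mul]
      rw [hzz] at this
      have := (mul_le_mul_iff_of_pos_right hz0).mp this
      linarith
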